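/- Let R be an algebra over a field F, let σ be an automorphism of R, and let D be a q-skew σ-derivation on R. Then J(R[x;σ,D]) ∩ R is a two-sided ideal of R that is closed under D, i.e., D(J(R[x;σ,D]) ∩ R) ⊆ J(R[x;σ,D]) ∩ R. -/

import Mathlib

/-- `S` is (a copy of) the Ore extension `R[x;σ,D]` of `R`: `ι : R → S` is the inclusion of
coefficients, `X ∈ S` is the variable, every element of `S` is uniquely a polynomial
`Σᵢ ι(aᵢ) * Xⁱ`, and multiplication is governed by `X * a = σ(a) * X + D(a)`. -/
structure IsOreExtension {R S : Type*} [Ring R] [Ring S]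
    (σ : R → R) (D : R → R) (ι : R → S) (X : S) : Prop where
  σ_add : ∀ a b : R, σ (a + b) = σ a + σ b
  σ_mul : ∀ a b : R, σ (a * b) = σ a * σ b
  σ_one : σ 1 = 1
  D_add : ∀ a b : R, D (a + b) = D a + D b
  D_mul : ∀ a b : R, D (a * b) = σ a * D b + D a * b
  ι_add : ∀ a b : R, ι (a + b) = ι a + ι b
  ι_mul : ∀ a b : R, ι (a * b) = ι a * ι b
  ι_one : ι 1 = 1
  X_comm : ∀ a : R, X * ι a = ι (σ a) * X + ι (D a)
  repr : ∀ s : S, ∃ c : ℕ →₀ R, s = c.sum fun i a => ι a * X ^ i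
  uniq : ∀ c : ℕ →₀ R, (c.sum fun i a => ι a * X ^ i) = 0 → c = 0

namespace OreAux

variable {R S : Type*} [Ring R] [Ring S] {σ D : R → R} {ι : R → S} {X : S}

section Basic
variable (h : IsOreExtension σ D ι X)
include h

lemma ι_zero : ι 0 = 0 := by
  have := h.ι_add 0 0; rw [add_zero] at this; exact left_eq_add.mp this

lemma σ_zero : σ 0 = 0 := by
  have := h.σ_add 0 0; rw [add_zero] at this; exact left_eq_add.mp this

lemma D_zero : D 0 = 0 := by
  have := h.D_add 0 0; rw [add_zero] at this; exact left_eq_add.mp this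

lemma ι_neg (a : R) : ι (-a) = - ι a := by
  have := h.ι_add a (-a); rw [add_neg_cancel, ι_zero h] at this
  exact (neg_eq_of_add_eq_zero_right this.symm).symm

lemma ι_sub (a b : R) : ι (a - b) = ι a - ι b := by
  rw [sub_eq_add_neg, h.ι_add, ι_neg h, sub_eq_add_neg]

end Basic

/-- polynomial from coefficients -/
def ps (ι : R → S) (X : S) (c : ℕ →₀ R) : S := c.sum fun i a => ι a * X ^ i

section Ps
variable (h : IsOreExtension σ D ι X)
include h

lemma ps_add (c c' : ℕ →₀ R) : ps ι X (c + c') = ps ι X c + ps ι X c' :=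
  Finsupp.sum_add_index' (fun i => by rw [ι_zero h, zero_mul])
    (fun i a b => by rw [h.ι_add, add_mul])

lemma ps_single (i : ℕ) (a : R) : ps ι X (Finsupp.single i a) = ι a * X ^ i :=
  Finsupp.sum_single_index (by rw [ι_zero h, zero_mul])

lemma ps_inj {c c' : ℕ →₀ R} (e : ps ι X c = ps ι X c') : c = c' := by
  have h1 : ps ι X (c - c' + c') = ps ι X c := by rw [sub_add_cancel]
  rw [ps_add h] at h1
  have h2 : ps ι X (c - c') = 0 := by
    have := congrArg (· - ps ι X c') h1; simp only [add_sub_cancel_right] at this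
    rw [this, e, sub_self]
  have := h.uniq _ h2
  exact sub_eq_zero.mp this
end Ps

/-- coefficients of an element -/
noncomputable def coeff (h : IsOreExtension σ D ι X) (s : S) : ℕ →₀ R := (h.repr s).choose

section Coeff
variable (h : IsOreExtension σ D ι X)
include h

lemma ps_coeff (s : S) : ps ι X (coeff h s) = s := (h.repr s).choose_spec.symm

lemma coeff_ps (c : ℕ →₀ R) : coeff h (ps ι X c) = c := ps_inj h (ps_coeff h _)

lemma coeff_add (s t : S) : coeff h (s + t) = coeff h s + coeff h t := by
  apply ps_inj h
  rw [ps_add h, ps_coeff h, ps_coeff h, ps_coeff h]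

lemma coeff_zero : coeff h (0 : S) = 0 := by
  have e : ps ι X (0 : ℕ →₀ R) = 0 := by rw [ps, Finsupp.sum_zero_index]
  rw [← e, coeff_ps h]

/-- induction principle for the Ore extension -/
lemma ind {P : S → Prop} (h0 : P 0) (hm : ∀ (a : R) (i : ℕ), P (ι a * X ^ i))
    (hadd : ∀ s t, P s → P t → P (s + t)) : ∀ s : S, P s := by
  intro s
  rw [← ps_coeff h s]
  generalize coeff h s = c
  induction c using Finsupp.induction with
  | zero => simpa [ps, Finsupp.sum_zero_index] using h0
  | single_add i a c hi ha ih =>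
      have : ps ι X (Finsupp.single i a + c) = ι a * X ^ i + ps ι X c := by
        rw [ps_add h, ps_single h]
      rw [this]
      exact hadd _ _ (hm a i) ih

end Coeff

section Tau

variable {F : Type*} [Field F] [Algebra F R]

/-- the image of `X` under the twisting automorphism -/
noncomputable def zz (ι : R → S) (X : S) (F : Type*) [Field F] [Algebra F R] (q : F) : S :=
  ι (algebraMap F R q⁻¹) * X

/-- the twisting automorphism `ι a ↦ ι (σ a)`, `X ↦ q⁻¹ X` -/
noncomputable def tau (h : IsOreExtension σ D ι X) (q : F) (s : S) : S :=
  (coeff h s).sum fun i a => ι (σ a) * (zz ι X F q) ^ i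

variable (h : IsOreExtension σ D ι X) (q : F)

lemma tau_ps (c : ℕ →₀ R) :
    tau h q (ps ι X c) = c.sum fun i a => ι (σ a) * (zz ι X F q) ^ i := by
  rw [tau, coeff_ps h]

lemma tau_monomial (a : R) (i : ℕ) :
    tau h q (ι a * X ^ i) = ι (σ a) * (zz ι X F q) ^ i := by
  rw [← ps_single h, tau_ps h]
  exact Finsupp.sum_single_index (by rw [σ_zero h, ι_zero h, zero_mul])

lemma tau_zero : tau h q 0 = 0 := by
  rw [tau, coeff_zero h, Finsupp.sum_zero_index]

lemma tau_add (s t : S) : tau h q (s + t) = tau h q s + tau h q t := by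
  rw [tau, tau, tau, coeff_add h]
  exact Finsupp.sum_add_index' (fun i => by rw [σ_zero h, ι_zero h, zero_mul])
    (fun i a b => by rw [h.σ_add, h.ι_add, add_mul])

lemma tau_neg (s : S) : tau h q (-s) = - tau h q s := by
  have := tau_add h q s (-s)
  rw [add_neg_cancel, tau_zero h] at this
  exact (neg_eq_of_add_eq_zero_right this.symm).symm

lemma tau_sub (s t : S) : tau h q (s - t) = tau h q s - tau h q t := by
  rw [sub_eq_add_neg, tau_add h, tau_neg h, sub_eq_add_neg]

lemma tau_one : tau h q 1 = 1 := by
  have : (1 : S) = ι 1 * X ^ 0 := by simp [h.ι_one]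
  conv_lhs => rw [this]
  rw [tau_monomial h, h.σ_one, h.ι_one, pow_zero, mul_one]

variable (hq : q ≠ 0) (hskew : ∀ a : R, D (σ a) = q • σ (D a))

include h in
lemma zz_mul_ι (b : R) :
    zz ι X F q * ι b = ι (σ b) * zz ι X F q + ι (algebraMap F R q⁻¹ * D b) := by
  rw [zz, mul_assoc, h.X_comm, mul_add, ← mul_assoc, ← h.ι_mul, Algebra.commutes,
    h.ι_mul, mul_assoc, ← h.ι_mul]

include hq hskew in
include h in
lemma zz_mul_ισ (b : R) :
    zz ι X F q * ι (σ b) = ι (σ (σ b)) * zz ι X F q + ι (σ (D b)) := by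
  rw [zz_mul_ι h]
  congr 2
  rw [hskew, Algebra.smul_def, ← mul_assoc, ← map_mul, inv_mul_cancel₀ hq, map_one, one_mul]

include hq hskew in
lemma tau_X_mul (s : S) : tau h q (X * s) = zz ι X F q * tau h q s := by
  induction s using ind h with
  | h0 => rw [mul_zero, tau_zero h, mul_zero]
  | hadd s t hs ht => rw [mul_add, tau_add h, tau_add h, mul_add, hs, ht]
  | hm b j =>
      have e1 : X * (ι b * X ^ j) = ι (σ b) * X ^ (j + 1) + ι (D b) * X ^ j := by
        rw [← mul_assoc, h.X_comm, add_mul, mul_assoc, ← pow_succ']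
      rw [e1, tau_add h, tau_monomial h, tau_monomial h, tau_monomial h,
        ← mul_assoc, zz_mul_ισ h q hq hskew, add_mul, mul_assoc, ← pow_succ']

lemma tau_ι_mul (a : R) (s : S) : tau h q (ι a * s) = ι (σ a) * tau h q s := by
  induction s using ind h with
  | h0 => rw [mul_zero, tau_zero h, mul_zero]
  | hadd s t hs ht => rw [mul_add, tau_add h, tau_add h, mul_add, hs, ht]
  | hm b j =>
      rw [← mul_assoc, ← h.ι_mul, tau_monomial h, tau_monomial h, h.σ_mul, h.ι_mul, mul_assoc]

include hq hskew in
lemma tau_monomial_mul (i : ℕ) : ∀ (a : R) (t : S),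
    tau h q (ι a * X ^ i * t) = ι (σ a) * (zz ι X F q) ^ i * tau h q t := by
  induction i with
  | zero => intro a t; rw [pow_zero, mul_one, tau_ι_mul h, pow_zero, mul_one]
  | succ i ih =>
      intro a t
      have e1 : ι a * X ^ (i + 1) * t = ι a * X ^ i * (X * t) := by
        rw [pow_succ, mul_assoc, mul_assoc, mul_assoc]
      rw [e1, ih a (X * t), tau_X_mul h q hq hskew, pow_succ, mul_assoc, mul_assoc,
        mul_assoc (zz ι X F q ^ i)]

include hq hskew in
lemma tau_mul (s t : S) : tau h q (s * t) = tau h q s * tau h q t := by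
  induction s using ind h with
  | h0 => rw [zero_mul, tau_zero h, zero_mul]
  | hadd u v hu hv => rw [add_mul, tau_add h, tau_add h, add_mul, hu, hv]
  | hm a i => rw [tau_monomial_mul h q hq hskew, tau_monomial h]

end Tau

section Lower

/-- polynomials of degree `< n` -/
def lower (ι : R → S) (X : S) (n : ℕ) : AddSubgroup S :=
  AddSubgroup.closure {s | ∃ a i, i < n ∧ s = ι a * X ^ i}

lemma monomial_mem_lower {a : R} {i n : ℕ} (hi : i < n) : ι a * X ^ i ∈ lower ι X n :=
  AddSubgroup.subset_closure ⟨a, i, hi, rfl⟩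

lemma lower_mono {m n : ℕ} (hmn : m ≤ n) : lower ι X m ≤ lower ι X n :=
  (AddSubgroup.closure_le _).mpr fun s ⟨a, i, hi, e⟩ =>
    e ▸ monomial_mem_lower (lt_of_lt_of_le hi hmn)

variable (h : IsOreExtension σ D ι X)
include h

lemma ι_mul_lower (b : R) {n : ℕ} {s : S} (hs : s ∈ lower ι X n) :
    ι b * s ∈ lower ι X n := by
  induction hs using AddSubgroup.closure_induction with
  | mem x hx =>
      obtain ⟨a, i, hi, rfl⟩ := hx
      rw [← mul_assoc, ← h.ι_mul]
      exact monomial_mem_lower hi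
  | zero => rw [mul_zero]; exact zero_mem _
  | add x y _ _ hx hy => rw [mul_add]; exact add_mem hx hy
  | neg x _ hx => rw [mul_neg]; exact neg_mem hx

lemma X_mul_lower {n : ℕ} {s : S} (hs : s ∈ lower ι X n) :
    X * s ∈ lower ι X (n + 1) := by
  induction hs using AddSubgroup.closure_induction with
  | mem x hx =>
      obtain ⟨a, i, hi, rfl⟩ := hx
      rw [← mul_assoc, h.X_comm, add_mul, mul_assoc, ← pow_succ']
      exact add_mem (monomial_mem_lower (by omega)) (monomial_mem_lower (by omega))
  | zero => rw [mul_zero]; exact zero_mem _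
  | add x y _ _ hx hy => rw [mul_add]; exact add_mem hx hy
  | neg x _ hx => rw [mul_neg]; exact neg_mem hx

end Lower

section Surj

variable {F : Type*} [Field F] [Algebra F R]
variable (h : IsOreExtension σ D ι X) (q : F) (hq : q ≠ 0)

include h in
lemma isUnit_σ {c : R} (hc : IsUnit c) : IsUnit (σ c) := by
  obtain ⟨u, rfl⟩ := hc
  exact ⟨⟨σ u, σ (↑u⁻¹), by rw [← h.σ_mul, u.mul_inv, h.σ_one],
    by rw [← h.σ_mul, u.inv_mul, h.σ_one]⟩, rfl⟩

include h hq in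
lemma zz_pow (n : ℕ) : ∃ c : R, IsUnit c ∧
    ∃ w ∈ lower ι X n, (zz ι X F q) ^ n = ι c * X ^ n + w := by
  induction n with
  | zero =>
      refine ⟨1, isUnit_one, 0, zero_mem _, ?_⟩
      rw [pow_zero, pow_zero, h.ι_one, mul_one, add_zero]
  | succ n ih =>
      obtain ⟨c, hc, w, hw, e⟩ := ih
      have he : IsUnit (algebraMap F R q⁻¹) :=
        (IsUnit.mk0 q⁻¹ (inv_ne_zero hq)).map (algebraMap F R)
      refine ⟨algebraMap F R q⁻¹ * σ c, he.mul (isUnit_σ h hc), ?_⟩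
      have e2 : (zz ι X F q) ^ (n + 1)
          = ι (algebraMap F R q⁻¹ * σ c) * X ^ (n + 1)
            + (ι (algebraMap F R q⁻¹ * D c) * X ^ n + ι (algebraMap F R q⁻¹) * (X * w)) := by
        rw [pow_succ', e, zz, mul_add, mul_assoc, ← mul_assoc X, h.X_comm, add_mul,
          mul_assoc (ι (σ c)), ← pow_succ', mul_add, ← mul_assoc, ← h.ι_mul,
          ← mul_assoc, ← h.ι_mul, add_assoc, mul_assoc (ι (algebraMap F R q⁻¹)) X w]
      exact ⟨_, add_mem (monomial_mem_lower (by omega))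
        (ι_mul_lower h _ (X_mul_lower h hw)), e2⟩

include h hq in
lemma lower_le_range (hσ : Function.Surjective σ) (n : ℕ) :
    ∀ s ∈ lower ι X n, ∃ t, tau h q t = s := by
  induction n with
  | zero =>
      intro s hs
      refine ⟨0, ?_⟩
      rw [tau_zero h]
      induction hs using AddSubgroup.closure_induction with
      | mem x hx => obtain ⟨a, i, hi, rfl⟩ := hx; omega
      | zero => rfl
      | add x y _ _ hx hy => rw [← hx, ← hy, add_zero]
      | neg x _ hx => rw [← hx, neg_zero]
  | succ n ih =>
      intro s hs
      induction hs using AddSubgroup.closure_induction with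
      | zero => exact ⟨0, tau_zero h q⟩
      | add x y _ _ hx hy =>
          obtain ⟨t1, ht1⟩ := hx; obtain ⟨t2, ht2⟩ := hy
          exact ⟨t1 + t2, by rw [tau_add h, ht1, ht2]⟩
      | neg x _ hx =>
          obtain ⟨t1, ht1⟩ := hx
          exact ⟨-t1, by rw [tau_neg h, ht1]⟩
      | mem x hx =>
          obtain ⟨b, i, hi, rfl⟩ := hx
          obtain ⟨c, hc, w, hw, e⟩ := zz_pow h q hq i
          obtain ⟨u, rfl⟩ := hc
          obtain ⟨a, ha⟩ := hσ (b * ↑u⁻¹)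
          obtain ⟨t2, ht2⟩ := ih _ (lower_mono (by omega) (ι_mul_lower h (b * ↑u⁻¹) hw))
          refine ⟨ι a * X ^ i - t2, ?_⟩
          rw [tau_sub h, ht2, tau_monomial h, ha, e, mul_add, ← mul_assoc, ← h.ι_mul,
            mul_assoc b, u.inv_mul, mul_one, add_sub_cancel_right]

include h hq in
lemma tau_surjective (hσ : Function.Surjective σ) : Function.Surjective (tau h q) := by
  intro s
  induction s using ind h with
  | h0 => exact ⟨0, tau_zero h q⟩
  | hadd s t hs ht =>
      obtain ⟨t1, ht1⟩ := hs; obtain ⟨t2, ht2⟩ := ht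
      exact ⟨t1 + t2, by rw [tau_add h, ht1, ht2]⟩
  | hm a i =>
      exact lower_le_range h q hq hσ (i + 1) _ (monomial_mem_lower (by omega))

end Surj

section Jacobson

variable {T : Type*} [Ring T]

lemma mem_jbot_iff {x : T} :
    x ∈ (⊥ : Ideal T).jacobson ↔ ∀ y, ∃ z, z * (y * x + 1) = 1 := by
  rw [Ideal.mem_jacobson_iff]
  constructor
  · intro hx y
    obtain ⟨z, hz⟩ := hx y
    refine ⟨z, ?_⟩
    rw [Ideal.mem_bot, sub_eq_zero] at hz
    rw [mul_add, mul_one, ← mul_assoc, hz]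
  · intro hx y
    obtain ⟨z, hz⟩ := hx y
    refine ⟨z, ?_⟩
    rw [mul_add, mul_one] at hz
    rw [Ideal.mem_bot, sub_eq_zero, mul_assoc, hz]

lemma jbot_mul_right {x : T} (hx : x ∈ (⊥ : Ideal T).jacobson) (s : T) :
    x * s ∈ (⊥ : Ideal T).jacobson := by
  rw [mem_jbot_iff] at hx ⊢
  intro y
  obtain ⟨z, hz⟩ := hx (s * y)
  have hz' : z * (s * y * x) = 1 - z := by
    rw [mul_add, mul_one] at hz
    rw [eq_sub_iff_add_eq, hz]
  refine ⟨1 - y * x * z * s, ?_⟩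
  calc (1 - y * x * z * s) * (y * (x * s) + 1)
      = y * x * s + 1 - y * x * (z * (s * y * x)) * s - y * x * z * s := by noncomm_ring
    _ = 1 := by rw [hz']; noncomm_ring

lemma jbot_map {τ : T → T} (hadd : ∀ a b, τ (a + b) = τ a + τ b)
    (hmul : ∀ a b, τ (a * b) = τ a * τ b) (hone : τ 1 = 1)
    (hsurj : Function.Surjective τ) {x : T} (hx : x ∈ (⊥ : Ideal T).jacobson) :
    τ x ∈ (⊥ : Ideal T).jacobson := by
  rw [mem_jbot_iff] at hx ⊢
  intro y
  obtain ⟨y', rfl⟩ := hsurj y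
  obtain ⟨z, hz⟩ := hx y'
  refine ⟨τ z, ?_⟩
  rw [← hone, ← hmul, ← hadd, ← hmul, hz]

end Jacobson

end OreAux

open OreAux in
/-- If `R` is an algebra over a field `F`, `σ` is an automorphism of `R` and `D` is a `q`-skew
`σ`-derivation, then `J(R[x;σ,D]) ∩ R` is a two-sided ideal of `R` closed under `D`. -/
theorem jacobson_cap_isTwoSidedIdeal_closed_under_D {F R S : Type*} [Field F]
    [Ring R] [Algebra F R] [Ring S]
    (σ D : R → R) (ι : R → S) (X : S)
    (hOre : IsOreExtension σ D ι X) (hσ : Function.Bijective σ)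
    (q : F) (hq : q ≠ 0) (hskew : ∀ a : R, D (σ a) = q • σ (D a)) :
    ∃ I : TwoSidedIdeal R,
      (∀ r : R, r ∈ I ↔ ι r ∈ (⊥ : Ideal S).jacobson) ∧ ∀ r ∈ I, D r ∈ I := by
  set J := (⊥ : Ideal S).jacobson with hJ
  refine ⟨TwoSidedIdeal.mk' {r | ι r ∈ J}
    (by simp only [Set.mem_setOf_eq, ι_zero hOre]; exact zero_mem J)
    (fun {a b} ha hb => by
      simp only [Set.mem_setOf_eq, hOre.ι_add] at *; exact add_mem ha hb)
    (fun {a} ha => by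
      simp only [Set.mem_setOf_eq, ι_neg hOre] at *; exact neg_mem ha)
    (fun {a b} hb => by
      simp only [Set.mem_setOf_eq, hOre.ι_mul] at *; exact Ideal.mul_mem_left _ _ hb)
    (fun {a b} ha => by
      simp only [Set.mem_setOf_eq, hOre.ι_mul] at *; exact jbot_mul_right ha _),
    fun r => by rw [TwoSidedIdeal.mem_mk']; rfl, ?_⟩
  intro r hr
  rw [TwoSidedIdeal.mem_mk'] at hr ⊢
  simp only [Set.mem_setOf_eq] at hr ⊢
  -- `X * ι r ∈ J`
  have h1 : X * ι r ∈ J := Ideal.mul_mem_left _ _ hr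
  -- `ι (σ r) ∈ J` via the twisting automorphism
  have htau : tau hOre q (ι r) = ι (σ r) := by
    conv_lhs => rw [show ι r = ι r * X ^ 0 by rw [pow_zero, mul_one]]
    rw [tau_monomial hOre, pow_zero, mul_one]
  have h2 : ι (σ r) ∈ J := by
    rw [← htau]
    exact jbot_map (tau_add hOre q) (tau_mul hOre q hq hskew) (tau_one hOre q)
      (tau_surjective hOre q hq hσ.2) hr
  have h3 : ι (σ r) * X ∈ J := jbot_mul_right h2 X
  have h4 : ι (D r) = X * ι r - ι (σ r) * X := by
    rw [hOre.X_comm, add_sub_cancel_left]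
  rw [h4]
  exact sub_mem h1 h3
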